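/- For every infinite set X ⊆ 2^ω, every real ε > 0 and every m ∈ ℕ, there exists a clopen set C ⊆ 2^ω determined by a finite set of coordinates disjoint from {0, 1, …, m} such that μ(C) < ε and X + C = 2^ω. -/

import Mathlib

open MeasureTheory Pointwise Finset ENNReal

/-- The standard product (Haar) probability measure on the Cantor space
`2^ω = ℕ → ZMod 2`, normalized so that the whole space has measure `1`. -/
noncomputable def cantorMeasure : Measure (ℕ → ZMod 2) :=
  Measure.addHaarMeasure
    ⟨⟨Set.univ, isCompact_univ⟩, by rw [interior_univ]; exact Set.univ_nonempty⟩

/-- A set `C ⊆ 2^ω` is determined by a finite set `S` of coordinates if membership in `C`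
depends only on the restriction to `S`. -/
def DeterminedBy (C : Set (ℕ → ZMod 2)) (S : Finset ℕ) : Prop :=
  ∀ x ∈ C, ∀ y : ℕ → ZMod 2, (∀ i ∈ S, y i = x i) → y ∈ C

section Aux

abbrev E' := ℕ → ZMod 2

noncomputable def πm (m : ℕ) : E' →ₗ[ZMod 2] E' where
  toFun y := fun i => if i ≤ m then 0 else y i
  map_add' := by intro a b; funext i; by_cases h : i ≤ m <;> simp [h]
  map_smul' := by intro c a; funext i; by_cases h : i ≤ m <;> simp [h]

lemma finite_preimage_πm {m : ℕ} {A : Set E'} (hA : A.Finite) : (πm m ⁻¹' A).Finite := by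
  classical
  have : Finite ↥A := hA.to_subtype
  rw [← Set.finite_coe_iff]
  have hinj : Function.Injective
      (fun y : ↥(πm m ⁻¹' A) => ((fun i : Fin (m+1) => (y : E') i), (⟨πm m y, y.2⟩ : ↥A))) := by
    rintro ⟨y1, h1⟩ ⟨y2, h2⟩ h
    obtain ⟨ha, hb⟩ := Prod.ext_iff.mp h
    have hb' : πm m y1 = πm m y2 := congrArg Subtype.val hb
    ext i
    by_cases hi : i ≤ m
    · exact congrFun ha ⟨i, Nat.lt_succ_of_le hi⟩
    · have := congrFun hb' i
      simpa [πm, hi] using this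
  exact Finite.of_injective _ hinj

lemma zmod2_cases : ∀ a : ZMod 2, a = 0 ∨ a = 1 := by decide

lemma greedy (X : Set E') (hX : X.Infinite) (m : ℕ) (n : ℕ) :
    ∃ x : Fin n → E', (∀ j, x j ∈ X) ∧
      ∀ c : Fin n → ZMod 2, (∑ j, c j • πm m (x j)) = 0 → c = 0 := by
  classical
  induction n with
  | zero => exact ⟨fun j => j.elim0, fun j => j.elim0, fun c _ => funext fun j => j.elim0⟩
  | succ n ih =>
    obtain ⟨x, hxX, hind⟩ := ih
    set A : Set E' := (fun c : Fin n → ZMod 2 => ∑ j, c j • πm m (x j)) '' Set.univ with hA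
    have hAfin : A.Finite := (Set.finite_univ).image _
    obtain ⟨xnew, hxnewX, hxnewA⟩ := (hX.diff (finite_preimage_πm (m := m) hAfin)).nonempty
    refine ⟨Fin.snoc x xnew, ?_, ?_⟩
    · intro j
      refine Fin.lastCases ?_ ?_ j
      · simpa [Fin.snoc_last] using hxnewX
      · intro j; simpa [Fin.snoc_castSucc] using hxX j
    · intro c hc0
      have hsum : (∑ j : Fin n, c j.castSucc • πm m (x j)) + c (Fin.last n) • πm m xnew = 0 := by
        rw [← hc0, Fin.sum_univ_castSucc]
        simp [Fin.snoc_castSucc, Fin.snoc_last]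
      rcases zmod2_cases (c (Fin.last n)) with hd | hd
      · have h1 : (∑ j : Fin n, c j.castSucc • πm m (x j)) = 0 := by
          simpa [hd] using hsum
        have := hind (fun j => c j.castSucc) h1
        funext j
        refine Fin.lastCases hd (fun j => congrFun this j) j
      · exfalso
        have hneg : ∀ v : E', -v = v := by
          intro v; funext i
          have : ∀ a : ZMod 2, -a = a := by decide
          exact this (v i)
        have hx : πm m xnew = ∑ j : Fin n, c j.castSucc • πm m (x j) := by
          have := eq_neg_of_add_eq_zero_right hsum
          rw [hd, one_smul] at this
          rw [this, hneg]
        exact hxnewA ⟨fun j => c j.castSucc, Set.mem_univ _, by simp only []; rw [← hx]⟩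

lemma choose_coords {ι : Type*} [Fintype ι] (m : ℕ) (u : ι → E')
    (hu : ∀ c : ι → ZMod 2, (∑ j, c j • u j) = 0 → c = 0)
    (hsupp : ∀ j i, i ≤ m → u j i = 0) :
    ∃ S : Finset ℕ, (∀ i ∈ S, m < i) ∧
      ∀ c : ι → ZMod 2, (∑ j, c j • (fun i : ↥S => u j ↑i)) = 0 → c = 0 := by
  classical
  set g : (ι → ZMod 2) → ℕ := fun c =>
    if h : ∃ i, (∑ j, c j • u j) i ≠ 0 then h.choose else 0 with hg
  have hgspec : ∀ c : ι → ZMod 2, c ≠ 0 → (∑ j, c j • u j) (g c) ≠ 0 := by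
    intro c hc
    have hne : (∑ j, c j • u j) ≠ 0 := fun h => hc (hu c h)
    have h : ∃ i, (∑ j, c j • u j) i ≠ 0 := Function.ne_iff.mp hne
    simp only [hg, dif_pos h]
    exact h.choose_spec
  have hptwise : ∀ (c : ι → ZMod 2) (i : ℕ), (∑ j, c j • u j) i = ∑ j, c j * u j i := by
    intro c i; simp [Finset.sum_apply]
  refine ⟨(Finset.univ.filter (fun c : ι → ZMod 2 => c ≠ 0)).image g, ?_, ?_⟩
  · intro i hi
    obtain ⟨c, hc, rfl⟩ := Finset.mem_image.mp hi
    have hc' : c ≠ 0 := (Finset.mem_filter.mp hc).2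
    by_contra hle
    push_neg at hle
    apply hgspec c hc'
    rw [hptwise]
    exact Finset.sum_eq_zero fun j _ => by rw [hsupp j _ hle, mul_zero]
  · intro c hc
    by_contra hc'
    have hmem : g c ∈ (Finset.univ.filter (fun c : ι → ZMod 2 => c ≠ 0)).image g :=
      Finset.mem_image.mpr ⟨c, Finset.mem_filter.mpr ⟨Finset.mem_univ _, hc'⟩, rfl⟩
    have := congrFun hc (⟨g c, hmem⟩ : ↥((Finset.univ.filter (fun c : ι → ZMod 2 => c ≠ 0)).image g))
    apply hgspec c hc'
    rw [hptwise]
    simpa [Finset.sum_apply] using this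

lemma dual_map {V : Type*} [AddCommGroup V] [Module (ZMod 2) V]
    {ι : Type*} [Fintype ι] (u : ι → V) (hu : LinearIndependent (ZMod 2) u)
    (W : Type*) [AddCommGroup W] [Module (ZMod 2) W] (w : ι → W) :
    ∃ σ : V →ₗ[ZMod 2] W, ∀ j, σ (u j) = w j := by
  classical
  have hs : LinearIndepOn (ZMod 2) id (Set.range u) := (linearIndepOn_id_range_iff hu.injective).mpr hu
  let B := Module.Basis.extend hs
  have hinj : Function.Injective u := hu.injective
  let val : hs.extend (Set.subset_univ _) → W := fun b =>
    if h : ∃ j, u j = ↑b then w h.choose else 0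
  refine ⟨B.constr (ZMod 2) val, fun j => ?_⟩
  have hmem : u j ∈ hs.extend (Set.subset_univ _) :=
    hs.subset_extend _ ⟨j, rfl⟩
  have : B ⟨u j, hmem⟩ = u j := Module.Basis.extend_apply_self hs ⟨u j, hmem⟩
  rw [← this, Module.Basis.constr_basis]
  have h : ∃ j', u j' = u j := ⟨j, rfl⟩
  simp only [val, dif_pos h]
  congr 1
  exact hinj h.choose_spec

end Aux

/-- For every infinite `X ⊆ 2^ω`, every `ε > 0` and every `m`, there is a clopen set `C`
determined by a finite set of coordinates disjoint from `{0, 1, …, m}` with `μ(C) < ε` and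
`X + C = 2^ω`. -/
theorem exists_clopen_small_add_eq_univ_avoiding (X : Set (ℕ → ZMod 2)) (hX : X.Infinite)
    (ε : ℝ) (hε : 0 < ε) (m : ℕ) :
    ∃ (C : Set (ℕ → ZMod 2)) (S : Finset ℕ), IsClopen C ∧ DeterminedBy C S ∧
      (∀ i ∈ S, m < i) ∧ cantorMeasure C < ENNReal.ofReal ε ∧ X + C = Set.univ := by
  classical
  -- choose t with (1/2)^t < ε
  obtain ⟨t, ht⟩ := exists_pow_lt_of_lt_one hε (by norm_num : (1/2 : ℝ) < 1)
  set W := Fin t → ZMod 2 with hW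
  have hcardW : Fintype.card W = 2 ^ t := by
    simp [hW, Fintype.card_fun]
  -- greedy family indexed by W
  obtain ⟨x0, hx0X, hind0⟩ := greedy X hX m (Fintype.card W)
  set e := Fintype.equivFin W with he
  set x : W → E' := fun w => x0 (e w) with hx
  have hxX : ∀ w, x w ∈ X := fun w => hx0X _
  have hind : ∀ c : W → ZMod 2, (∑ w, c w • πm m (x w)) = 0 → c = 0 := by
    intro c hc
    have hsum : (∑ j : Fin (Fintype.card W), (c (e.symm j)) • πm m (x0 j)) = 0 := by
      rw [← hc]
      rw [← Equiv.sum_comp e (fun j => (c (e.symm j)) • πm m (x0 j))]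
      simp [hx]
    have := hind0 (fun j => c (e.symm j)) hsum
    funext w
    have := congrFun this (e w)
    simpa using this
  -- coordinates
  obtain ⟨S, hSm, hSind⟩ := choose_coords m (fun w => πm m (x w)) hind
    (fun w i hi => by simp [πm, hi])
  -- restriction map
  set ρ : E' →ₗ[ZMod 2] (↥S → ZMod 2) := LinearMap.funLeft (ZMod 2) (ZMod 2) ((↑) : ↥S → ℕ)
    with hρ
  -- linear independence of restricted family
  have hliS : LinearIndependent (ZMod 2) (fun w : W => ρ (πm m (x w))) := by
    rw [Fintype.linearIndependent_iff]
    intro c hc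
    have : (∑ w, c w • (fun i : ↥S => πm m (x w) ↑i)) = 0 := hc
    exact fun w => congrFun (hSind c this) w
  -- dual map
  obtain ⟨σ, hσ⟩ := dual_map _ hliS W id
  set τ : E' →ₗ[ZMod 2] W := σ.comp ρ with hτ
  -- τ (x w) = w
  have hτx : ∀ w, τ (x w) = w := by
    intro w
    have hres : ρ (x w) = ρ (πm m (x w)) := by
      funext i
      simp only [hρ, LinearMap.funLeft_apply, πm, LinearMap.coe_mk, AddHom.coe_mk]
      rw [if_neg (by exact Nat.not_le.mpr (hSm i i.2))]
    show σ (ρ (x w)) = w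
    rw [hres]
    exact hσ w
  set C : Set E' := τ ⁻¹' {0} with hC
  -- char-2 facts
  have haddself : ∀ v : E', v + v = 0 := by
    intro v; funext i
    have : ∀ a : ZMod 2, a + a = 0 := by decide
    exact this (v i)
  have haddselfW : ∀ v : W, v + v = 0 := by
    intro v; funext i
    have : ∀ a : ZMod 2, a + a = 0 := by decide
    exact this (v i)
  -- continuity of τ
  have hρcont : Continuous fun y : E' => ρ y := by
    apply continuous_pi
    intro i
    exact continuous_apply (i : ℕ)
  have hτcont : Continuous fun y : E' => τ y := by
    have : DiscreteTopology (↥S → ZMod 2) := inferInstance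
    exact (continuous_of_discreteTopology (α := ↥S → ZMod 2) (f := fun v => σ v)).comp hρcont
  have hCclopen : IsClopen C := (isClopen_discrete ({0} : Set W)).preimage hτcont
  -- covering
  have hcover : X + C = Set.univ := by
    ext z
    simp only [Set.mem_univ, iff_true]
    refine Set.mem_add.mpr ⟨x (τ z), hxX _, x (τ z) + z, ?_, ?_⟩
    · show τ (x (τ z) + z) ∈ ({0} : Set W)
      simp only [map_add, hτx, Set.mem_singleton_iff]
      exact haddselfW (τ z)
    · rw [← add_assoc, haddself, zero_add]
  -- measure
  haveI hinv : cantorMeasure.IsAddLeftInvariant := by unfold cantorMeasure; infer_instance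
  have huniv1 : cantorMeasure Set.univ = 1 := by
    unfold cantorMeasure; exact Measure.addHaarMeasure_self
  have hmeasC : MeasurableSet C := hCclopen.2.measurableSet
  have htriv : ∀ w : W, cantorMeasure (τ ⁻¹' {w}) = cantorMeasure C := by
    intro w
    have hpre : τ ⁻¹' {w} = (fun z => x w + z) ⁻¹' C := by
      ext z
      simp only [Set.mem_preimage, Set.mem_singleton_iff, hC, map_add, hτx]
      constructor
      · intro h; rw [h]; exact haddselfW w
      · intro h
        have : w + (w + τ z) = w + 0 := by rw [h]
        rwa [← add_assoc, haddselfW, zero_add, add_zero] at this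
    rw [hpre]
    exact measure_preimage_add cantorMeasure (x w) C
  have hpart : (⋃ w : W, τ ⁻¹' {w}) = Set.univ := by
    ext z
    simp only [Set.mem_iUnion, Set.mem_preimage, Set.mem_singleton_iff, Set.mem_univ, iff_true]
    exact ⟨τ z, rfl⟩
  have hdisj : Pairwise (Function.onFun Disjoint fun w : W => τ ⁻¹' {w}) := by
    intro w1 w2 hne
    simp only [Function.onFun, Set.disjoint_left]
    intro z h1 h2
    simp only [Set.mem_preimage, Set.mem_singleton_iff] at h1 h2
    exact hne (h1 ▸ h2 ▸ rfl)
  have hmeas : ∀ w : W, MeasurableSet (τ ⁻¹' {w}) :=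
    fun w => (hτcont.measurable) (measurableSet_singleton w)
  have hsum : cantorMeasure Set.univ = ∑ w : W, cantorMeasure (τ ⁻¹' {w}) := by
    rw [← hpart, measure_iUnion hdisj hmeas, tsum_fintype]
  have h2 : (∑ w : W, cantorMeasure (τ ⁻¹' {w})) = (Fintype.card W : ℝ≥0∞) * cantorMeasure C := by
    rw [Finset.sum_congr rfl (fun w _ => htriv w), Finset.sum_const, nsmul_eq_mul]
    simp
  have hval : (Fintype.card W : ℝ≥0∞) * cantorMeasure C = 1 := by
    rw [← h2, ← hsum, huniv1]
  have hcc : ((Fintype.card W : ℝ≥0∞)) = 2 ^ t := by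
    rw [hcardW]; push_cast; ring
  rw [hcc] at hval
  have h2ne : ((2 : ℝ≥0∞) ^ t) ≠ 0 := pow_ne_zero _ (by norm_num)
  have h2top : ((2 : ℝ≥0∞) ^ t) ≠ ⊤ := ENNReal.pow_ne_top (by norm_num)
  have hμC : cantorMeasure C = ((2 : ℝ≥0∞) ^ t)⁻¹ := by
    calc cantorMeasure C = ((2:ℝ≥0∞)^t)⁻¹ * ((2:ℝ≥0∞)^t * cantorMeasure C) := by
          rw [← mul_assoc, ENNReal.inv_mul_cancel h2ne h2top, one_mul]
      _ = ((2:ℝ≥0∞)^t)⁻¹ := by rw [hval, mul_one]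
  have hhalf : ENNReal.ofReal ((1/2:ℝ)) = 2⁻¹ := by
    rw [one_div, ENNReal.ofReal_inv_of_pos (by norm_num)]
    norm_num
  have hμlt : cantorMeasure C < ENNReal.ofReal ε := by
    rw [hμC, ENNReal.inv_pow, ← hhalf, ← ENNReal.ofReal_pow (by norm_num : (0:ℝ) ≤ 1/2)]
    exact (ENNReal.ofReal_lt_ofReal_iff hε).mpr ht
  exact ⟨C, S, hCclopen, fun c hc y hy => by
    have : ρ y = ρ c := funext fun i => hy i i.2
    show τ y ∈ ({0} : Set W)
    show σ (ρ y) ∈ ({0} : Set W)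
    rw [this]
    exact hc, hSm, hμlt, hcover⟩
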